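/- Let f : ℝ → ℝ be continuous with f(0)=0, F(s) = ∫_0^s f, and suppose f(t)t − q·F(t) ≥ 0 for all t and t ↦ f(t)/|t|^{q-1} strictly increasing on (0,∞) and (−∞,0), with q > 1. Then for every t ≠ 0, f(t)t − q F(t) > 0 unless f ≡ 0 on the segment between 0 and t. -/

import Mathlib

open intervalIntegral Set

theorem stmt_12 (f F : ℝ → ℝ) (q : ℝ)
    (hf : Continuous f) (hf0 : f 0 = 0) (hq : 1 < q)
    (hF : ∀ s : ℝ, F s = ∫ τ in (0:ℝ)..s, f τ)
    (hnonneg : ∀ t : ℝ, 0 ≤ f t * t - q * F t)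
    (hpos : StrictMonoOn (fun t => f t / |t| ^ (q - 1)) (Set.Ioi (0:ℝ)))
    (hneg : StrictMonoOn (fun t => f t / |t| ^ (q - 1)) (Set.Iio (0:ℝ))) :
    ∀ t : ℝ, t ≠ 0 → ¬ (∀ s ∈ Set.uIcc (0:ℝ) t, f s = 0) →
      0 < f t * t - q * F t := by
  intro t ht _
  have hq0 : (0:ℝ) < q := by linarith
  have hq1 : (0:ℝ) ≤ q - 1 := by linarith
  have habs : Continuous fun x : ℝ => |x| ^ (q - 1) :=
    continuous_abs.rpow_const (fun x => Or.inr hq1)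
  rcases lt_or_gt_of_ne ht with htneg | htpos
  · -- t < 0
    have htabs : (0:ℝ) < |t| := abs_pos.mpr (ne_of_lt htneg)
    have htne : |t| ^ (q - 1) ≠ 0 := (Real.rpow_pos_of_pos htabs _).ne'
    set c := f t / |t| ^ (q - 1) with hc
    have key : (∫ s in t..(0:ℝ), c * |s| ^ (q - 1)) < ∫ s in t..(0:ℝ), f s := by
      apply integral_lt_integral_of_continuousOn_of_le_of_exists_lt htneg
        ((continuous_const.mul habs).continuousOn) hf.continuousOn
      · intro s hs
        rcases eq_or_lt_of_le hs.2 with h0 | hslt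
        · simp [h0, hf0, Real.zero_rpow (by linarith : q - 1 ≠ 0)]
        · have := hneg htneg hslt hs.1
          have hsabs : (0:ℝ) < |s| ^ (q - 1) :=
            Real.rpow_pos_of_pos (abs_pos.mpr (ne_of_lt hslt)) _
          calc c * |s| ^ (q - 1) ≤ (f s / |s| ^ (q - 1)) * |s| ^ (q - 1) := by
                exact mul_le_mul_of_nonneg_right this.le hsabs.le
            _ = f s := div_mul_cancel₀ _ hsabs.ne'
      · refine ⟨t / 2, ⟨by linarith, by linarith⟩, ?_⟩
        have h1 : t < t / 2 := by linarith
        have h2 : t / 2 < 0 := by linarith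
        have := hneg htneg h2 h1
        have hsabs : (0:ℝ) < |t / 2| ^ (q - 1) :=
          Real.rpow_pos_of_pos (abs_pos.mpr (ne_of_lt h2)) _
        calc c * |t / 2| ^ (q - 1) < (f (t/2) / |t/2| ^ (q - 1)) * |t/2| ^ (q - 1) :=
              mul_lt_mul_of_pos_right this hsabs
          _ = f (t/2) := div_mul_cancel₀ _ hsabs.ne'
    have hint : (∫ s in t..(0:ℝ), c * |s| ^ (q - 1)) = c * (|t| ^ q / q) := by
      rw [intervalIntegral.integral_const_mul]
      congr 1
      have : (∫ s in t..(0:ℝ), |s| ^ (q - 1)) = ∫ s in t..(0:ℝ), (-s) ^ (q - 1) := by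
        apply intervalIntegral.integral_congr
        intro s hs
        rw [Set.uIcc_of_le htneg.le] at hs
        simp [abs_of_nonpos hs.2]
      rw [this]
      have := intervalIntegral.integral_comp_neg (a := t) (b := 0)
        (fun x => x ^ (q - 1))
      simp only [neg_zero] at this
      rw [this, integral_rpow (Or.inl (by linarith))]
      rw [sub_add_cancel, Real.zero_rpow hq0.ne', abs_of_neg htneg]
      ring
    have hFt : F t = -∫ s in t..(0:ℝ), f s := by
      rw [hF t, intervalIntegral.integral_symm]
    have hcq : c * |t| ^ q = f t * |t| := by
      have : |t| ^ q = |t| ^ (q - 1) * |t| := by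
        rw [← Real.rpow_add_one htabs.ne' (q - 1), sub_add_cancel]
      rw [hc, this]
      field_simp
    have : c * (|t| ^ q / q) < ∫ s in t..(0:ℝ), f s := hint ▸ key
    have hq' : c * |t| ^ q < q * ∫ s in t..(0:ℝ), f s := by
      have := mul_lt_mul_of_pos_left this hq0
      calc c * |t| ^ q = q * (c * (|t| ^ q / q)) := by field_simp
        _ < q * ∫ s in t..(0:ℝ), f s := this
    rw [hFt]
    rw [hcq, abs_of_neg htneg] at hq'
    nlinarith
  · -- t > 0
    have htabs : |t| = t := abs_of_pos htpos
    have htne : (t:ℝ) ^ (q - 1) ≠ 0 := (Real.rpow_pos_of_pos htpos _).ne'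
    set c := f t / t ^ (q - 1) with hc
    have key : (∫ s in (0:ℝ)..t, f s) < ∫ s in (0:ℝ)..t, c * |s| ^ (q - 1) := by
      apply integral_lt_integral_of_continuousOn_of_le_of_exists_lt htpos
        hf.continuousOn ((continuous_const.mul habs).continuousOn)
      · intro s hs
        rcases eq_or_lt_of_le hs.2 with h0 | hslt
        · subst h0
          show f s ≤ f s / s ^ (q - 1) * |s| ^ (q - 1)
          rw [htabs, div_mul_cancel₀ _ htne]
        · have := hpos hs.1 htpos hslt
          have hsabs : (0:ℝ) < |s| ^ (q - 1) :=
            Real.rpow_pos_of_pos (abs_pos.mpr (ne_of_gt hs.1)) _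
          have hteq : f t / |t| ^ (q - 1) = c := by rw [htabs]
          calc f s = (f s / |s| ^ (q - 1)) * |s| ^ (q - 1) :=
                (div_mul_cancel₀ _ hsabs.ne').symm
            _ ≤ c * |s| ^ (q - 1) := by
                rw [← hteq]; exact mul_le_mul_of_nonneg_right this.le hsabs.le
      · refine ⟨t / 2, ⟨by linarith, by linarith⟩, ?_⟩
        have h1 : (0:ℝ) < t / 2 := by linarith
        have h2 : t / 2 < t := by linarith
        have := hpos h1 htpos h2
        have hsabs : (0:ℝ) < |t / 2| ^ (q - 1) :=
          Real.rpow_pos_of_pos (abs_pos.mpr (ne_of_gt h1)) _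
        have hteq : f t / |t| ^ (q - 1) = c := by rw [htabs]
        calc f (t/2) = (f (t/2) / |t/2| ^ (q - 1)) * |t/2| ^ (q - 1) :=
              (div_mul_cancel₀ _ hsabs.ne').symm
          _ < c * |t/2| ^ (q - 1) := by
              rw [← hteq]; exact mul_lt_mul_of_pos_right this hsabs
    have hint : (∫ s in (0:ℝ)..t, c * |s| ^ (q - 1)) = c * (t ^ q / q) := by
      rw [intervalIntegral.integral_const_mul]
      congr 1
      have : (∫ s in (0:ℝ)..t, |s| ^ (q - 1)) = ∫ s in (0:ℝ)..t, s ^ (q - 1) := by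
        apply intervalIntegral.integral_congr
        intro s hs
        rw [Set.uIcc_of_le htpos.le] at hs
        simp [abs_of_nonneg hs.1]
      rw [this, integral_rpow (Or.inl (by linarith))]
      rw [sub_add_cancel, Real.zero_rpow hq0.ne']
      ring
    have hcq : c * t ^ q = f t * t := by
      have : t ^ q = t ^ (q - 1) * t := by
        rw [← Real.rpow_add_one htpos.ne' (q - 1), sub_add_cancel]
      rw [hc, this]
      field_simp
    have : F t < c * (t ^ q / q) := by rw [hF t]; exact hint ▸ key
    have hq' : q * F t < c * t ^ q := by
      have := mul_lt_mul_of_pos_left this hq0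
      calc q * F t < q * (c * (t ^ q / q)) := this
        _ = c * t ^ q := by field_simp
    rw [hcq] at hq'
    linarith
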